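/- For a Hermitian matrix H on a finite-dimensional Hilbert space and any positive-definite density matrix ρ, the quantity Tr[ρ·(−βH)] − Tr[ρ ln ρ] is at most ln Tr[e^{−βH}], with equality iff ρ = e^{−βH}/Tr[e^{−βH}] (Gibbs variational principle). -/

import Mathlib

open Matrix ComplexOrder

/-- Matrix logarithm of a Hermitian matrix, defined via the spectral decomposition. -/
noncomputable def matLog {n : Type*} [Fintype n] [DecidableEq n] {ρ : Matrix n n ℂ}
    (h : ρ.IsHermitian) : Matrix n n ℂ :=
  (h.eigenvectorUnitary : Matrix n n ℂ) *
    Matrix.diagonal (fun i => (Real.log (h.eigenvalues i) : ℂ)) *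
    star (h.eigenvectorUnitary : Matrix n n ℂ)

lemma sum_eq_sum_iff_forall {ι : Type*} [Fintype ι] {f g : ι → ℝ} (h : ∀ i, f i ≤ g i) :
    (∑ i, f i) = (∑ i, g i) ↔ ∀ i, f i = g i := by
  constructor
  · intro he i
    by_contra hne
    exact absurd he (ne_of_lt (Finset.sum_lt_sum (fun j _ => h j)
      ⟨i, Finset.mem_univ i, lt_of_le_of_ne (h i) hne⟩))
  · intro he
    exact Finset.sum_congr rfl fun i _ => he i

lemma gibbs_aux {n : Type*} [Fintype n] (p q : n → ℝ) (c : n → n → ℝ)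
    (hp : ∀ i, 0 < p i) (hps : ∑ i, p i = 1)
    (hc : ∀ i j, 0 ≤ c i j) (hrow : ∀ i, ∑ j, c i j = 1) (hcol : ∀ j, ∑ i, c i j = 1)
    (Z : ℝ) (hZ : Z = ∑ j, Real.exp (q j)) (hZpos : 0 < Z) :
    (∑ i, ∑ j, p i * q j * c i j) - (∑ i, p i * Real.log (p i)) ≤ Real.log Z ∧
      ((∑ i, ∑ j, p i * q j * c i j) - (∑ i, p i * Real.log (p i)) = Real.log Z ↔
        ∀ i j, c i j ≠ 0 → Real.exp (q j) = p i * Z) := by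
  set F : n × n → ℝ := fun x => c x.1 x.2 * (p x.1 * (q x.2 - Real.log (p x.1) - Real.log Z))
    with hF
  set G : n × n → ℝ := fun x => c x.1 x.2 * (Real.exp (q x.2) / Z - p x.1) with hG
  have hlogx : ∀ i j, Real.log (Real.exp (q j) / (p i * Z))
      = q j - Real.log (p i) - Real.log Z := by
    intro i j
    rw [Real.log_div (Real.exp_ne_zero _) (mul_ne_zero (hp i).ne' hZpos.ne'),
      Real.log_exp, Real.log_mul (hp i).ne' hZpos.ne']
    ring
  have hxpos : ∀ i j, 0 < Real.exp (q j) / (p i * Z) := fun i j =>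
    div_pos (Real.exp_pos _) (mul_pos (hp i) hZpos)
  have hpx : ∀ i j, p i * (Real.exp (q j) / (p i * Z) - 1) = Real.exp (q j) / Z - p i := by
    intro i j
    field_simp [(hp i).ne', hZpos.ne']
  have hFG : ∀ x : n × n, F x ≤ G x := by
    rintro ⟨i, j⟩
    rcases eq_or_ne (c i j) 0 with h | h
    · simp [hF, hG, h]
    · simp only [hF, hG]
      refine mul_le_mul_of_nonneg_left ?_ (hc i j)
      rw [← hlogx i j, ← hpx i j]
      exact mul_le_mul_of_nonneg_left
        (Real.log_le_sub_one_of_pos (hxpos i j)) (hp i).le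
  have hFeqG : ∀ x : n × n, F x = G x ↔ (c x.1 x.2 ≠ 0 → Real.exp (q x.2) = p x.1 * Z) := by
    rintro ⟨i, j⟩
    constructor
    · intro he hcne
      simp only [hF, hG] at he
      have h1 := mul_left_cancel₀ hcne he
      rw [← hlogx i j, ← hpx i j] at h1
      have h2 := mul_left_cancel₀ (hp i).ne' h1
      by_contra hne
      have hxne : Real.exp (q j) / (p i * Z) ≠ 1 := by
        intro h1
        rw [div_eq_one_iff_eq (mul_pos (hp i) hZpos).ne'] at h1
        exact hne h1
      exact absurd h2 (ne_of_lt (Real.log_lt_sub_one_of_pos (hxpos i j) hxne))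
    · intro he
      rcases eq_or_ne (c i j) 0 with h | h
      · simp [hF, hG, h]
      · have hx1 : Real.exp (q j) / (p i * Z) = 1 := by
          rw [div_eq_one_iff_eq (mul_pos (hp i) hZpos).ne']
          exact he h
        simp only [hF, hG]
        congr 1
        rw [← hlogx i j, ← hpx i j, hx1]
        simp
  have hsumF : ∑ x : n × n, F x
      = (∑ i, ∑ j, p i * q j * c i j) - (∑ i, p i * Real.log (p i)) - Real.log Z := by
    rw [Fintype.sum_prod_type]
    have expand : ∀ i j, F (i, j)
        = p i * q j * c i j - c i j * (p i * Real.log (p i)) - c i j * (p i * Real.log Z) := by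
      intro i j; simp only [hF]; ring
    simp_rw [expand, Finset.sum_sub_distrib, ← Finset.sum_mul, hrow, one_mul,
      ← Finset.sum_mul, hps, one_mul]
  have hsumG : ∑ x : n × n, G x = 0 := by
    rw [Fintype.sum_prod_type]
    have expand : ∀ i j, G (i, j)
        = c i j * (Real.exp (q j) / Z) - c i j * p i := by
      intro i j; simp only [hG]; ring
    simp_rw [expand, Finset.sum_sub_distrib]
    have h1 : ∑ i : n, ∑ j : n, c i j * (Real.exp (q j) / Z) = 1 := by
      rw [Finset.sum_comm]
      simp_rw [← Finset.sum_mul, hcol, one_mul, ← Finset.sum_div, ← hZ, div_self hZpos.ne']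
    have h2 : ∑ i : n, ∑ j : n, c i j * p i = 1 := by
      simp_rw [← Finset.sum_mul, hrow, one_mul, hps]
    rw [h1, h2, sub_self]
  have hle : ∑ x : n × n, F x ≤ ∑ x : n × n, G x :=
    Finset.sum_le_sum fun x _ => hFG x
  constructor
  · have := hle
    rw [hsumG] at this
    linarith [hsumF]
  · rw [show ((∑ i, ∑ j, p i * q j * c i j) - (∑ i, p i * Real.log (p i)) = Real.log Z)
        ↔ (∑ x : n × n, F x = ∑ x : n × n, G x) by rw [hsumF, hsumG]; constructor <;> intro h <;> linarith,
      sum_eq_sum_iff_forall hFG]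
    constructor
    · intro h i j
      exact (hFeqG (i, j)).1 (h (i, j))
    · intro h x
      exact (hFeqG x).2 (h x.1 x.2)

lemma conj_mul_conj {n : Type*} [Fintype n] [DecidableEq n] (M D E : Matrix n n ℂ)
    (h : star M * M = 1) : (M * D * star M) * (M * E * star M) = M * (D * E) * star M := by
  calc (M * D * star M) * (M * E * star M)
      = M * (D * ((star M * M) * (E * star M))) := by simp only [Matrix.mul_assoc]
    _ = M * (D * E) * star M := by
        rw [h, Matrix.one_mul]
        simp only [Matrix.mul_assoc]

lemma conj_helper (a b : ℝ) (w : ℂ) :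
    ((a : ℂ) * (w * ((b : ℂ) * (starRingEnd ℂ) w))).re = a * b * Complex.normSq w := by
  have : (a : ℂ) * (w * ((b : ℂ) * (starRingEnd ℂ) w))
      = ((a * b : ℝ) : ℂ) * (w * (starRingEnd ℂ) w) := by push_cast; ring
  rw [this, Complex.mul_conj]
  push_cast
  simp

theorem gibbs_variational_principle
    {n : Type*} [Fintype n] [DecidableEq n] [Nonempty n]
    (H : Matrix n n ℂ) (hH : H.IsHermitian) (β : ℝ) (hβ : 0 < β)
    (ρ : Matrix n n ℂ) (hρ : ρ.IsHermitian) (hpd : ρ.PosDef) (htr : ρ.trace = 1) :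
    (Matrix.trace (ρ * (-(β : ℂ) • H))).re - (Matrix.trace (ρ * matLog hρ)).re ≤
        Real.log (Matrix.trace (NormedSpace.exp (-(β : ℂ) • H))).re ∧
      ((Matrix.trace (ρ * (-(β : ℂ) • H))).re - (Matrix.trace (ρ * matLog hρ)).re =
          Real.log (Matrix.trace (NormedSpace.exp (-(β : ℂ) • H))).re ↔
        ρ = (Matrix.trace (NormedSpace.exp (-(β : ℂ) • H)))⁻¹ •
              NormedSpace.exp (-(β : ℂ) • H)) := by
  classical
  set A : Matrix n n ℂ := -(β : ℂ) • H with hAdef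
  have hA : A.IsHermitian := by
    rw [Matrix.IsHermitian, hAdef, Matrix.conjTranspose_smul, hH.eq]
    congr 1
    simp [Complex.star_def, Complex.conj_ofReal]
  set U : Matrix n n ℂ := (hρ.eigenvectorUnitary : Matrix n n ℂ) with hUdef
  set V : Matrix n n ℂ := (hA.eigenvectorUnitary : Matrix n n ℂ) with hVdef
  have hU1 : star U * U = 1 := hρ.eigenvectorUnitary.2.1
  have hU2 : U * star U = 1 := hρ.eigenvectorUnitary.2.2
  have hV1 : star V * V = 1 := hA.eigenvectorUnitary.2.1
  have hV2 : V * star V = 1 := hA.eigenvectorUnitary.2.2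
  set p : n → ℝ := hρ.eigenvalues with hpdef
  set q : n → ℝ := hA.eigenvalues with hqdef
  have hp : ∀ i, 0 < p i := fun i => hpd.eigenvalues_pos i
  set Dp : Matrix n n ℂ := Matrix.diagonal (fun i => ((p i : ℝ) : ℂ)) with hDp
  set Dq : Matrix n n ℂ := Matrix.diagonal (fun j => ((q j : ℝ) : ℂ)) with hDq
  have hρspec : ρ = U * Dp * star U := hρ.spectral_theorem
  have hAspec : A = V * Dq * star V := hA.spectral_theorem
  -- trace conjugation
  have traceconj : ∀ (M X : Matrix n n ℂ), star M * M = 1 →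
      (M * X * star M).trace = X.trace := by
    intro M X h
    rw [Matrix.trace_mul_comm, ← Matrix.mul_assoc, h, Matrix.one_mul]
  -- Z
  set Z : ℝ := ∑ j, Real.exp (q j) with hZdef
  have hZpos : 0 < Z := Finset.sum_pos (fun j _ => Real.exp_pos _) Finset.univ_nonempty
  -- exp A
  have hexp : NormedSpace.exp A = V * Matrix.diagonal (fun j => ((Real.exp (q j) : ℝ) : ℂ))
      * star V := by
    have hVinv : V⁻¹ = star V := Matrix.inv_eq_left_inv hV1
    have hVunit : IsUnit V := ⟨⟨V, star V, hV2, hV1⟩, rfl⟩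
    conv_lhs => rw [hAspec]
    rw [← hVinv, Matrix.exp_conj V Dq hVunit, hVinv, hDq, Matrix.exp_diagonal]
    have : (NormedSpace.exp fun j => ((q j : ℝ) : ℂ)) = fun j => ((Real.exp (q j) : ℝ) : ℂ) := by
      funext i
      simp [Pi.exp_def, ← Complex.exp_eq_exp_ℂ, Complex.ofReal_exp]
    rw [this]
  have htrexp : (NormedSpace.exp A).trace = ((Z : ℝ) : ℂ) := by
    rw [hexp, traceconj V _ hV1, Matrix.trace_diagonal, hZdef]
    push_cast
    rfl
  have htrexp_re : (Matrix.trace (NormedSpace.exp A)).re = Z := by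
    rw [htrexp, Complex.ofReal_re]
  -- trace of rho log rho
  have hmatLog : matLog hρ = U * Matrix.diagonal (fun i => ((Real.log (p i) : ℝ) : ℂ)) * star U :=
    rfl
  have hρlog : ρ * matLog hρ
      = U * Matrix.diagonal (fun i => ((p i : ℝ) : ℂ) * ((Real.log (p i) : ℝ) : ℂ)) * star U := by
    rw [hmatLog, hρspec, conj_mul_conj U _ _ hU1, hDp, Matrix.diagonal_mul_diagonal]
  have htrlog_re : (Matrix.trace (ρ * matLog hρ)).re = ∑ i, p i * Real.log (p i) := by
    rw [hρlog, traceconj U _ hU1, Matrix.trace_diagonal]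
    rw [Complex.re_sum]
    congr 1; funext i
    rw [← Complex.ofReal_mul, Complex.ofReal_re]
  -- sum of eigenvalues of rho is 1
  have hps : ∑ i, p i = 1 := by
    have : ρ.trace = ∑ i, ((p i : ℝ) : ℂ) := by
      rw [hρspec, traceconj U _ hU1, hDp, Matrix.trace_diagonal]
    rw [htr] at this
    exact_mod_cast this.symm
  -- the overlap matrix
  set W : Matrix n n ℂ := star U * V with hWdef
  have hstarW : star W = star V * U := by
    rw [hWdef, StarMul.star_mul, star_star]
  set c : n → n → ℝ := fun i j => Complex.normSq (W i j) with hcdef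
  have hc : ∀ i j, 0 ≤ c i j := fun i j => Complex.normSq_nonneg _
  have hWW : W * star W = 1 := by
    rw [hstarW, hWdef]
    calc star U * V * (star V * U) = star U * (V * star V) * U := by
          simp only [Matrix.mul_assoc]
      _ = 1 := by rw [hV2, Matrix.mul_one, hU1]
  have hWW' : star W * W = 1 := by
    rw [hWdef, hstarW]
    calc star V * U * (star U * V) = star V * (U * star U) * V := by
          simp only [Matrix.mul_assoc]
      _ = 1 := by rw [hU2, Matrix.mul_one, hV1]
  have hrow : ∀ i, ∑ j, c i j = 1 := by
    intro i
    have e : (W * star W) i i = (1 : Matrix n n ℂ) i i := by rw [hWW]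
    rw [Matrix.mul_apply, Matrix.one_apply_eq] at e
    simp only [Matrix.star_apply, Complex.star_def, Complex.mul_conj] at e
    exact_mod_cast e
  have hcol : ∀ j, ∑ i, c i j = 1 := by
    intro j
    have e : (star W * W) j j = (1 : Matrix n n ℂ) j j := by rw [hWW']
    rw [Matrix.mul_apply, Matrix.one_apply_eq] at e
    simp only [Matrix.star_apply, Complex.star_def, ← Complex.normSq_eq_conj_mul_self] at e
    exact_mod_cast e
  -- trace rho * A
  have hρA : ρ * A = U * (Dp * (W * (Dq * star W))) * star U := by
    rw [hρspec, hAspec, hstarW, hWdef]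
    simp only [Matrix.mul_assoc]
    rw [hU2, Matrix.mul_one]
  have htrρA_re : (Matrix.trace (ρ * A)).re = ∑ i, ∑ j, p i * q j * c i j := by
    rw [hρA, traceconj U _ hU1]
    have entry : ∀ i, (Dp * (W * (Dq * star W))) i i
        = ∑ j, (p i : ℂ) * (W i j * ((q j : ℂ) * (starRingEnd ℂ) (W i j))) := by
      intro i
      rw [hDp, Matrix.diagonal_mul, Matrix.mul_apply, Finset.mul_sum]
      congr 1; funext j
      rw [hDq, Matrix.diagonal_mul, Matrix.star_apply, Complex.star_def]
    rw [Matrix.trace]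
    simp only [Matrix.diag_apply, entry]
    rw [Complex.re_sum]
    congr 1; funext i
    rw [Complex.re_sum]
    congr 1; funext j
    exact conj_helper (p i) (q j) (W i j)
  -- main inequality
  obtain ⟨hineq, hiff⟩ := gibbs_aux p q c hp hps hc hrow hcol Z hZdef hZpos
  -- Gibbs state
  set De : Matrix n n ℂ := Matrix.diagonal (fun j => ((Real.exp (q j) / Z : ℝ) : ℂ)) with hDe
  have hGibbs : (Matrix.trace (NormedSpace.exp A))⁻¹ • NormedSpace.exp A
      = V * De * star V := by
    have hfun : ((Z : ℂ)⁻¹ • fun j => ((Real.exp (q j) : ℝ) : ℂ))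
        = fun j => ((Real.exp (q j) / Z : ℝ) : ℂ) := by
      funext j
      simp only [Pi.smul_apply, smul_eq_mul]
      push_cast
      ring
    rw [htrexp, hexp, ← smul_mul_assoc, ← mul_smul_comm, ← Matrix.diagonal_smul, hfun, hDe]
  have hUV : U * W = V := by rw [hWdef, ← Matrix.mul_assoc, hU2, Matrix.one_mul]
  have hWV : W * star V = star U := by rw [hWdef, Matrix.mul_assoc, hV2, Matrix.mul_one]
  have hWne : ∀ i j, c i j ≠ 0 ↔ W i j ≠ 0 := by
    intro i j
    rw [hcdef]
    exact not_congr Complex.normSq_eq_zero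
  constructor
  · rw [htrρA_re, htrlog_re, htrexp_re]
    exact hineq
  · rw [htrρA_re, htrlog_re, htrexp_re, hiff]
    constructor
    · intro hcond
      have key : Dp * W = W * De := by
        ext i j
        rw [hDp, hDe, Matrix.diagonal_mul, Matrix.mul_diagonal]
        rcases eq_or_ne (W i j) 0 with h0 | h0
        · rw [h0]; ring
        · have he := hcond i j ((hWne i j).2 h0)
          have hpi : p i = Real.exp (q j) / Z := (eq_div_iff hZpos.ne').2 he.symm
          rw [hpi]; ring
      rw [hGibbs]
      calc ρ = U * Dp * star U := hρspec
        _ = U * Dp * (W * star V) := by rw [hWV]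
        _ = U * (Dp * W) * star V := by simp only [Matrix.mul_assoc]
        _ = U * (W * De) * star V := by rw [key]
        _ = (U * W) * De * star V := by simp only [Matrix.mul_assoc]
        _ = V * De * star V := by rw [hUV]
    · intro hG i j hcij
      have hmat : U * Dp * star U = V * De * star V := by rw [← hρspec, hG, hGibbs]
      have e1 : star U * (U * Dp * star U) * V = Dp * W := by
        rw [hWdef]
        calc star U * (U * Dp * star U) * V
            = (star U * U) * (Dp * (star U * V)) := by simp only [Matrix.mul_assoc]
          _ = Dp * (star U * V) := by rw [hU1, Matrix.one_mul]
      have e2 : star U * (V * De * star V) * V = W * De := by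
        rw [hWdef]
        calc star U * (V * De * star V) * V
            = (star U * V) * (De * (star V * V)) := by simp only [Matrix.mul_assoc]
          _ = (star U * V) * De := by rw [hV1, Matrix.mul_one]
      have key : Dp * W = W * De := by rw [← e1, ← e2, hmat]
      have hent := congrFun (congrFun key i) j
      rw [hDp, hDe, Matrix.diagonal_mul, Matrix.mul_diagonal] at hent
      have hW0 : W i j ≠ 0 := (hWne i j).1 hcij
      rw [mul_comm ((p i : ℝ) : ℂ) (W i j)] at hent
      have hre : ((p i : ℝ) : ℂ) = ((Real.exp (q j) / Z : ℝ) : ℂ) := mul_left_cancel₀ hW0 hent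
      have hpr : p i = Real.exp (q j) / Z := by exact_mod_cast hre
      rw [hpr, div_mul_cancel₀ _ hZpos.ne']
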